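/- Let A be a left brace such that A³ = ⟨0⟩. Then for every element a ∈ A and every integer m one has aᵐ = m·a + ((m² − m)/2)·(a ⋆ a), where aᵐ is the m-th power of a in the multiplicative group, m·a is the m-th additive multiple, and (m² − m)/2 is an integer. -/

import Mathlib

/-- A left brace: `(A, +)` is an abelian group, `(A, *)` is a group, and
`a * (b + c) = a * b + a * c - a` for all `a b c`. -/
class LeftBrace (A : Type*) extends AddCommGroup A, Group A where
  mul_add_eq : ∀ a b c : A, a * (b + c) = a * b + a * c - a

namespace LeftBrace

variable {A : Type*} [LeftBrace A]

/-- The star operation of a left brace: `a ⋆ b = a * b - a - b`. -/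
def star (a b : A) : A := a * b - a - b

/-- `K ⋆ L`: the subgroup of the additive group of `A` generated by all
`x ⋆ y` with `x ∈ K`, `y ∈ L`. -/
def setStar (K L : Set A) : AddSubgroup A :=
  AddSubgroup.closure (Set.image2 star K L)

/-- A subbrace of `A`: a subset that is simultaneously a subgroup of the
additive group of `A` and a subgroup of the multiplicative group of `A`. -/
def IsSubbrace (S : Set A) : Prop :=
  (0 : A) ∈ S ∧ (∀ x ∈ S, ∀ y ∈ S, x + y ∈ S) ∧ (∀ x ∈ S, -x ∈ S) ∧
    (1 : A) ∈ S ∧ (∀ x ∈ S, ∀ y ∈ S, x * y ∈ S) ∧ (∀ x ∈ S, x⁻¹ ∈ S)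

/-- A left ideal of `A`: a subbrace `S` with `a ⋆ b ∈ S` for all `a ∈ A`, `b ∈ S`. -/
def IsLeftIdeal (S : Set A) : Prop :=
  IsSubbrace S ∧ ∀ a : A, ∀ b ∈ S, star a b ∈ S

/-- An ideal of `A`: a subbrace `S` with `a ⋆ z ∈ S` and `z ⋆ a ∈ S`
for all `a ∈ A`, `z ∈ S`. -/
def IsIdeal (S : Set A) : Prop :=
  IsSubbrace S ∧ ∀ a : A, ∀ z ∈ S, star a z ∈ S ∧ star z a ∈ S

/-- The left series of the brace `A`, with the indexing shifted by one:
`leftSeriesN A 0 = A¹ = A` and `leftSeriesN A n = Aⁿ⁺¹ = A ⋆ Aⁿ`.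
In particular `leftSeriesN A 1 = A²` and `leftSeriesN A 2 = A³`. -/
def leftSeriesN (A : Type*) [LeftBrace A] : ℕ → AddSubgroup A
  | 0 => ⊤
  | n + 1 => setStar Set.univ ((leftSeriesN A n : AddSubgroup A) : Set A)

/-- The right series of the brace `A`, with the indexing shifted by one:
`rightSeriesN A 0 = A⁽¹⁾ = A` and `rightSeriesN A n = A⁽ⁿ⁺¹⁾ = A⁽ⁿ⁾ ⋆ A`.
In particular `rightSeriesN A 2 = A⁽³⁾` and `rightSeriesN A 3 = A⁽⁴⁾`. -/
def rightSeriesN (A : Type*) [LeftBrace A] : ℕ → AddSubgroup A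
  | 0 => ⊤
  | n + 1 => setStar ((rightSeriesN A n : AddSubgroup A) : Set A) Set.univ

end LeftBrace

open LeftBrace


/-- The lambda map of a left brace, as an additive homomorphism. -/
private def lamHom {A : Type*} [LeftBrace A] (x : A) : A →+ A :=
  AddMonoidHom.mk' (fun y => x * y - x) (by
    intro b c
    simp only [LeftBrace.mul_add_eq]
    abel)

private lemma lamHom_apply {A : Type*} [LeftBrace A] (x y : A) :
    lamHom x y = x * y - x := rfl

private lemma cstep_up (m : ℤ) : ((1+m)^2 - (1+m))/2 = (m^2-m)/2 + m := by
  obtain ⟨k, hk⟩ := Int.even_mul_succ_self (m-1)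
  have h1 : m^2 - m = 2*k := by linear_combination hk
  have h2 : (1+m)^2 - (1+m) = 2*(k+m) := by linear_combination hk
  rw [h1, h2, Int.mul_ediv_cancel_left _ two_ne_zero,
    Int.mul_ediv_cancel_left _ two_ne_zero]

private lemma cstep_down (m : ℤ) : ((-1+m)^2 - (-1+m))/2 = (m^2-m)/2 + 1 - m := by
  obtain ⟨k, hk⟩ := Int.even_mul_succ_self (m-1)
  have h1 : m^2 - m = 2*k := by linear_combination hk
  have h2 : (-1+m)^2 - (-1+m) = 2*(k+1-m) := by linear_combination hk
  rw [h1, h2, Int.mul_ediv_cancel_left _ two_ne_zero,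
    Int.mul_ediv_cancel_left _ two_ne_zero]

/-- If `A` is a left brace with `A³ = ⟨0⟩` (here
`A³ = A ⋆ (A ⋆ A) = leftSeriesN A 2`), then for every `a ∈ A` and every
integer `m` one has `aᵐ = m·a + ((m² − m)/2)·(a ⋆ a)` (note that `m² − m`
is even, so the integer division `(m² − m)/2` is exact). -/
theorem zpow_eq {A : Type*} [LeftBrace A]
    (h3 : leftSeriesN A 2 = ⊥) (a : A) (m : ℤ) :
    a ^ m = m • a + ((m ^ 2 - m) / 2) • star a a := by
  set s := star a a with hs_def
  have hzero : ∀ x : A, x * (0:A) = x := by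
    intro x
    have h := LeftBrace.mul_add_eq x 0 0
    rw [add_zero, eq_sub_iff_add_eq] at h
    exact (add_left_cancel h).symm
  have hone : (1:A) = 0 := by
    have h := hzero 1
    rw [one_mul] at h
    exact h.symm
  have hstar0 : ∀ x : A, star x s = 0 := by
    intro x
    have hmem : s ∈ leftSeriesN A 1 := by
      apply AddSubgroup.subset_closure
      exact Set.mem_image2_of_mem (Set.mem_univ a) (Set.mem_univ a)
    have hmem2 : star x s ∈ leftSeriesN A 2 := by
      apply AddSubgroup.subset_closure
      exact Set.mem_image2_of_mem (Set.mem_univ x) hmem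
    rw [h3] at hmem2
    exact hmem2
  have hmul : ∀ x y : A, x * y = lamHom x y + x := by
    intro x y; rw [lamHom_apply]; abel
  have hlam_s : ∀ x : A, lamHom x s = s := by
    intro x
    have h := hstar0 x
    rw [LeftBrace.star] at h
    rw [lamHom_apply]
    exact sub_eq_zero.mp h
  have hlam_aa : lamHom a a = a + s := by
    rw [lamHom_apply, hs_def, LeftBrace.star]
    abel
  have hainv : a⁻¹ = -a + s := by
    have h : a * (-a + s) = 1 := by
      rw [hmul, map_add, map_neg, hlam_aa, hlam_s, hone]
      abel
    exact inv_eq_of_mul_eq_one_right h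
  induction m using Int.induction_on with
  | zero => simp [hone]
  | succ n ih =>
    rw [show ((n:ℤ)+1) = 1 + n by ring, zpow_add, zpow_one, hmul, ih,
      map_add, map_zsmul, map_zsmul, hlam_aa, hlam_s, cstep_up]
    module
  | pred n ih =>
    have hlam_inv_a : lamHom a⁻¹ a = -a⁻¹ := by
      rw [lamHom_apply, inv_mul_cancel, hone]
      abel
    rw [show (-(n:ℤ)-1) = -1 + -n by ring, zpow_add, zpow_neg_one, hmul, ih,
      map_add, map_zsmul, map_zsmul, hlam_s, hlam_inv_a, hainv, cstep_down]
    module
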